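/- arXiv:2505.01388 — 4 statements merged into one kernel-verified Lean document; each statement's English description precedes it below -/
import Mathlib

section
/- Multi-class NPC equals 1 if and only if the supports of the P_i are pairwise disjoint: for probability mass functions P_1, …, P_n on a finite set X with n ≥ 2, ((∑_{x∈X} max_i P_i(x)) − 1)/(n−1) = 1 if and only if for all i ≠ j and all x ∈ X, P_i(x) · P_j(x) = 0. -/
theorem multiclass_npc_eq_one_iff {X : Type*} [Fintype X]
    (n : ℕ) (hn : 2 ≤ n) (P : Fin n → X → ℝ)
    (h0 : ∀ i x, 0 ≤ P i x) (h1 : ∀ i, ∑ x, P i x = 1)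
    (hne : (Finset.univ : Finset (Fin n)).Nonempty) :
    ((∑ x, Finset.univ.sup' hne fun i => P i x) - 1) / ((n : ℝ) - 1) = 1
      ↔ ∀ i j : Fin n, i ≠ j → ∀ x, P i x * P j x = 0 := by
  have hn1 : (1:ℝ) < (n:ℝ) := by exact_mod_cast Nat.lt_of_lt_of_le Nat.one_lt_two hn
  have hnz : (n:ℝ) - 1 ≠ 0 := by linarith
  set f : X → ℝ := fun x => Finset.univ.sup' hne fun i => P i x with hf
  have hfg : ∀ x, f x ≤ ∑ i, P i x := by
    intro x
    apply Finset.sup'_le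
    intro i _
    exact Finset.single_le_sum (fun j _ => h0 j x) (Finset.mem_univ i)
  have hsumg : ∑ x, ∑ i, P i x = (n:ℝ) := by
    rw [Finset.sum_comm]
    simp [h1]
  have hdiv : ((∑ x, f x) - 1) / ((n : ℝ) - 1) = 1 ↔ ∑ x, f x = (n:ℝ) := by
    rw [div_eq_one_iff_eq hnz]; constructor <;> intro h <;> linarith
  rw [hdiv]
  constructor
  · intro h i j hij x
    have hzero : ∑ x, ((∑ i, P i x) - f x) = 0 := by
      rw [Finset.sum_sub_distrib, hsumg, h, sub_self]
    have hall : ∀ y ∈ (Finset.univ : Finset X), (∑ i, P i y) - f y = 0 := by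
      refine (Finset.sum_eq_zero_iff_of_nonneg ?_).mp hzero
      intro y _; linarith [hfg y]
    have hx := hall x (Finset.mem_univ x)
    obtain ⟨k, _, hk⟩ := Finset.exists_mem_eq_sup' hne fun i => P i x
    have hrest : ∑ i ∈ Finset.univ.erase k, P i x = 0 := by
      have : ∑ i, P i x = P k x + ∑ i ∈ Finset.univ.erase k, P i x := by
        exact (Finset.add_sum_erase _ (fun i => P i x) (Finset.mem_univ k)).symm
      have hfx : f x = P k x := hk
      linarith
    have hrz : ∀ i ∈ Finset.univ.erase k, P i x = 0 :=
      (Finset.sum_eq_zero_iff_of_nonneg (fun i _ => h0 i x)).mp hrest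
    rcases eq_or_ne i k with rfl | hi
    · have : P j x = 0 := hrz j (Finset.mem_erase.mpr ⟨hij.symm, Finset.mem_univ j⟩)
      simp [this]
    · have : P i x = 0 := hrz i (Finset.mem_erase.mpr ⟨hi, Finset.mem_univ i⟩)
      simp [this]
  · intro h
    rw [← hsumg]
    apply Finset.sum_congr rfl
    intro x _
    obtain ⟨k, _, hk⟩ := Finset.exists_mem_eq_sup' hne fun i => P i x
    have hfx : f x = P k x := hk
    rcases eq_or_lt_of_le (h0 k x) with hk0 | hk0
    · have hall0 : ∀ i, P i x = 0 := by
        intro i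
        have := Finset.le_sup' (fun i => P i x) (Finset.mem_univ i)
        have hle : P i x ≤ f x := this
        have := h0 i x
        rw [hfx, ← hk0] at hle
        linarith
      simp [hfx, ← hk0, hall0]
    · have hall0 : ∀ i, i ≠ k → P i x = 0 := by
        intro i hi
        have := h i k hi x
        rcases mul_eq_zero.mp this with h' | h'
        · exact h'
        · exact absurd h' (ne_of_gt hk0)
      rw [hfx, Finset.sum_eq_single k (fun i _ hi => hall0 i hi) (by simp)]
end

section
/- Multi-class NPC equals 0 if and only if all distributions are equal: for probability mass functions P_1, …, P_n on a finite set X with n ≥ 2, ((∑_{x∈X} max_i P_i(x)) − 1)/(n−1) = 0 if and only if P_i = P_j for all i, j. -/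
theorem multiclass_npc_eq_zero_iff {X : Type*} [Fintype X]
    (n : ℕ) (hn : 2 ≤ n) (P : Fin n → X → ℝ)
    (h0 : ∀ i x, 0 ≤ P i x) (h1 : ∀ i, ∑ x, P i x = 1)
    (hne : (Finset.univ : Finset (Fin n)).Nonempty) :
    ((∑ x, Finset.univ.sup' hne fun i => P i x) - 1) / ((n : ℝ) - 1) = 0
      ↔ ∀ i j : Fin n, P i = P j := by
  have hden : (n : ℝ) - 1 ≠ 0 := by
    have : (2 : ℝ) ≤ n := by exact_mod_cast hn
    linarith
  rw [div_eq_zero_iff, or_iff_left hden, sub_eq_zero]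
  constructor
  · intro h i j
    have key : ∀ k : Fin n, ∀ x : X,
        (Finset.univ.sup' hne fun i => P i x) = P k x := by
      intro k
      have hsum : ∑ x, ((Finset.univ.sup' hne fun i => P i x) - P k x) = 0 := by
        rw [Finset.sum_sub_distrib, h, h1 k, sub_self]
      have hnn : ∀ x ∈ Finset.univ,
          0 ≤ (Finset.univ.sup' hne fun i => P i x) - P k x := by
        intro x _
        have := Finset.le_sup' (fun i => P i x) (Finset.mem_univ k)
        linarith
      intro x
      have := (Finset.sum_eq_zero_iff_of_nonneg hnn).mp hsum x (Finset.mem_univ x)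
      linarith
    funext x
    rw [← key i x, key j x]
  · intro h
    have : ∀ x : X, (Finset.univ.sup' hne fun i => P i x) = P hne.choose x := by
      intro x
      have : (fun i : Fin n => P i x) = fun _ => P hne.choose x := by
        funext i; rw [h i hne.choose]
      rw [this, Finset.sup'_const]
    simp only [this]
    exact h1 _
end

section
/- Let X ⊂ ℝ be finite with more than one element and let P_A, P_B be probability mass functions on X. Then the maximum over all functions g : X → X of ∑_{x∈X} g(x)(P_A(x) − P_B(x)) equals (max X − min X) · (1/2) ∑_{x∈X} |P_A(x) − P_B(x)|, attained by the binarization g(x) = max X if P_A(x) ≥ P_B(x) and g(x) = min X otherwise. -/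
theorem potential_contrast_isGreatest (X : Finset ℝ) (hX : 1 < X.card)
    (PA PB : ℝ → ℝ)
    (hA0 : ∀ x ∈ X, 0 ≤ PA x) (hB0 : ∀ x ∈ X, 0 ≤ PB x)
    (hA1 : ∑ x ∈ X, PA x = 1) (hB1 : ∑ x ∈ X, PB x = 1)
    (hXne : X.Nonempty) :
    IsGreatest {v : ℝ | ∃ g : ℝ → ℝ, (∀ x ∈ X, g x ∈ X) ∧
        v = ∑ x ∈ X, g x * (PA x - PB x)}
      ((X.max' hXne - X.min' hXne) * ((1 / 2) * ∑ x ∈ X, |PA x - PB x|)) ∧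
    ∑ x ∈ X, (if PB x ≤ PA x then X.max' hXne else X.min' hXne) * (PA x - PB x)
      = (X.max' hXne - X.min' hXne) * ((1 / 2) * ∑ x ∈ X, |PA x - PB x|) := by
  set M := X.max' hXne with hM
  set m := X.min' hXne with hm
  have hf0 : ∑ x ∈ X, (PA x - PB x) = 0 := by
    rw [Finset.sum_sub_distrib, hA1, hB1]; ring
  have key : ∑ x ∈ X, (if PB x ≤ PA x then M else m) * (PA x - PB x)
      = (M - m) * ((1/2) * ∑ x ∈ X, |PA x - PB x|) := by
    have h : ∀ x ∈ X, (if PB x ≤ PA x then M else m) * (PA x - PB x)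
        = (M+m)/2 * (PA x - PB x) + (M-m)/2 * |PA x - PB x| := by
      intro x _
      by_cases hx : PB x ≤ PA x
      · rw [if_pos hx, abs_of_nonneg (by linarith)]; ring
      · rw [if_neg hx, abs_of_neg (by push_neg at hx; linarith)]; ring
    rw [Finset.sum_congr rfl h, Finset.sum_add_distrib, ← Finset.mul_sum, ← Finset.mul_sum,
      hf0]
    ring
  refine ⟨⟨⟨fun x => if PB x ≤ PA x then M else m, fun x hx => ?_, key.symm⟩, ?_⟩, key⟩
  · by_cases hx : PB x ≤ PA x <;> simp [hx, X.max'_mem, X.min'_mem, M, m]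
  · rintro v ⟨g, hg, rfl⟩
    rw [← key]
    apply Finset.sum_le_sum
    intro x hx
    by_cases h : PB x ≤ PA x
    · rw [if_pos h]
      exact mul_le_mul_of_nonneg_right (X.le_max' _ (hg x hx)) (by linarith)
    · rw [if_neg h]
      have h2 := X.min'_le _ (hg x hx)
      push_neg at h
      nlinarith
end

section
/- For probability mass functions P_A, P_B on a finite set X ⊂ ℝ with |X| > 1 and any injective f : X → T ⊂ ℝ with T finite and |T| > 1, PC_T(f∗P_A, f∗P_B) = ((max T − min T)/(max X − min X)) · PC_X(P_A, P_B), where PC_S(P,Q) denotes the maximum over g : S → S of ∑_{s∈S} g(s)(P(s) − Q(s)). -/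
lemma pc_eq (S : Finset ℝ) (hS : S.Nonempty) (μ : ℝ → ℝ) (hsum : ∑ s ∈ S, μ s = 0) :
    sSup {v : ℝ | ∃ g : ℝ → ℝ, (∀ s ∈ S, g s ∈ S) ∧ v = ∑ s ∈ S, g s * μ s}
      = (S.max' hS - S.min' hS) * ∑ s ∈ S, max (μ s) 0 := by
  have hminmax : ∑ s ∈ S, min (μ s) 0 = - ∑ s ∈ S, max (μ s) 0 := by
    have h : ∑ s ∈ S, (min (μ s) 0 + max (μ s) 0) = 0 := by
      simp only [min_add_max]; simpa using hsum
    rw [Finset.sum_add_distrib] at h; linarith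
  have key : (S.max' hS - S.min' hS) * ∑ s ∈ S, max (μ s) 0
      = ∑ s ∈ S, (S.max' hS * max (μ s) 0 + S.min' hS * min (μ s) 0) := by
    rw [Finset.sum_add_distrib, ← Finset.mul_sum, ← Finset.mul_sum, hminmax]; ring
  apply IsGreatest.csSup_eq
  constructor
  · refine ⟨fun s => if 0 ≤ μ s then S.max' hS else S.min' hS, fun s hs => ?_, ?_⟩
    · by_cases h : 0 ≤ μ s <;> simp [h, S.max'_mem hS, S.min'_mem hS]
    · rw [key]
      apply Finset.sum_congr rfl
      intro s hs
      beta_reduce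
      by_cases h : 0 ≤ μ s
      · rw [if_pos h, max_eq_left h, min_eq_right h]; ring
      · push_neg at h
        rw [if_neg (not_le.mpr h), max_eq_right h.le, min_eq_left h.le]; ring
  · rintro v ⟨g, hg, rfl⟩
    rw [key]
    apply Finset.sum_le_sum
    intro s hs
    by_cases h : 0 ≤ μ s
    · have hle := S.le_max' (g s) (hg s hs)
      rw [max_eq_left h, min_eq_right h]
      nlinarith
    · push_neg at h
      have hle := S.min'_le (g s) (hg s hs)
      rw [max_eq_right h.le, min_eq_left h.le]
      nlinarith

theorem potential_contrast_rescaling (X T : Finset ℝ)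
    (hX : 1 < X.card) (hT : 1 < T.card)
    (hXne : X.Nonempty) (hTne : T.Nonempty)
    (f : ℝ → ℝ) (hf : Set.InjOn f X) (hfT : ∀ x ∈ X, f x ∈ T)
    (PA PB : ℝ → ℝ)
    (hA0 : ∀ x ∈ X, 0 ≤ PA x) (hB0 : ∀ x ∈ X, 0 ≤ PB x)
    (hA1 : ∑ x ∈ X, PA x = 1) (hB1 : ∑ x ∈ X, PB x = 1) :
    sSup {v : ℝ | ∃ g : ℝ → ℝ, (∀ t ∈ T, g t ∈ T) ∧
        v = ∑ t ∈ T, g t * ((∑ x ∈ X, if f x = t then PA x else 0)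
              - (∑ x ∈ X, if f x = t then PB x else 0))}
      = ((T.max' hTne - T.min' hTne) / (X.max' hXne - X.min' hXne))
          * sSup {v : ℝ | ∃ g : ℝ → ℝ, (∀ x ∈ X, g x ∈ X) ∧
              v = ∑ x ∈ X, g x * (PA x - PB x)} := by
  set μ : ℝ → ℝ := fun x => PA x - PB x with hμ
  have hsumX : ∑ x ∈ X, μ x = 0 := by
    simp [hμ, Finset.sum_sub_distrib, hA1, hB1]
  set ν : ℝ → ℝ := fun t => ∑ x ∈ X, if f x = t then μ x else 0 with hν
  have hdiff : ∀ t : ℝ, (∑ x ∈ X, if f x = t then PA x else 0)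
      - (∑ x ∈ X, if f x = t then PB x else 0) = ν t := by
    intro t
    rw [hν, ← Finset.sum_sub_distrib]
    apply Finset.sum_congr rfl
    intro x hx
    by_cases h : f x = t <;> simp [h, hμ]
  have hsumT : ∑ t ∈ T, ν t = 0 := by
    rw [hν, Finset.sum_comm]
    have h2 : ∀ x ∈ X, (∑ t ∈ T, if f x = t then μ x else 0) = μ x := fun x hx => by
      rw [Finset.sum_ite_eq T (f x) (fun _ => μ x), if_pos (hfT x hx)]
    rw [Finset.sum_congr rfl h2, hsumX]
  have hνfx : ∀ x ∈ X, ν (f x) = μ x := by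
    intro x hx
    show (∑ x' ∈ X, if f x' = f x then μ x' else 0) = μ x
    rw [show (∑ x' ∈ X, if f x' = f x then μ x' else 0)
        = ∑ x' ∈ X, if x' = x then μ x' else 0 from
      Finset.sum_congr rfl fun x' hx' => by
        by_cases h : x' = x
        · simp [h]
        · rw [if_neg h, if_neg (fun hfe => h (hf hx' hx hfe))]]
    simp [Finset.sum_ite_eq' X x (fun x' => μ x'), hx]
  have hmaxsum : ∑ t ∈ T, max (ν t) 0 = ∑ x ∈ X, max (μ x) 0 := by
    have himg : X.image f ⊆ T := by
      intro t ht
      obtain ⟨x, hx, rfl⟩ := Finset.mem_image.mp ht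
      exact hfT x hx
    rw [← Finset.sum_subset himg (fun t ht hnot => ?_)]
    · rw [Finset.sum_image (fun x hx y hy h => hf hx hy h)]
      exact Finset.sum_congr rfl fun x hx => by rw [hνfx x hx]
    · have : ν t = 0 := by
        rw [hν]
        apply Finset.sum_eq_zero
        intro x hx
        rw [if_neg]
        intro h
        exact hnot (Finset.mem_image.mpr ⟨x, hx, h⟩)
      simp [this]
  have hL : sSup {v : ℝ | ∃ g : ℝ → ℝ, (∀ t ∈ T, g t ∈ T) ∧
        v = ∑ t ∈ T, g t * ((∑ x ∈ X, if f x = t then PA x else 0)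
              - (∑ x ∈ X, if f x = t then PB x else 0))}
      = (T.max' hTne - T.min' hTne) * ∑ t ∈ T, max (ν t) 0 := by
    rw [← pc_eq T hTne ν hsumT]
    congr 1
    ext v
    constructor
    · rintro ⟨g, hg, rfl⟩
      exact ⟨g, hg, Finset.sum_congr rfl fun t ht => by rw [hdiff t]⟩
    · rintro ⟨g, hg, rfl⟩
      exact ⟨g, hg, Finset.sum_congr rfl fun t ht => by rw [hdiff t]⟩
  have hR : sSup {v : ℝ | ∃ g : ℝ → ℝ, (∀ x ∈ X, g x ∈ X) ∧
              v = ∑ x ∈ X, g x * (PA x - PB x)}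
      = (X.max' hXne - X.min' hXne) * ∑ x ∈ X, max (μ x) 0 :=
    pc_eq X hXne μ hsumX
  have hne : X.max' hXne - X.min' hXne ≠ 0 :=
    sub_ne_zero.mpr (ne_of_gt (X.min'_lt_max'_of_card hX))
  rw [hL, hR, hmaxsum]
  field_simp
end
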